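/- For the function u(x,t) = (1-t)^{-1/2} exp(x²/(4(1-t))) on ℝ × (0,1), there do not exist positive constants C and c such that u(x,t)/u(0,t) ≤ C·exp(c x²/t) for all x ∈ ℝ and t ∈ (1/2, 1). -/

import Mathlib

open Real

/-- For u(x,t) = (1-t)^{-1/2} exp(x²/(4(1-t))) on ℝ × (0,1), there do not exist positive
constants C and c such that u(x,t)/u(0,t) ≤ C·exp(c x²/t) for all x ∈ ℝ and t ∈ (1/2, 1). -/
theorem stmt_1 :
    ¬ ∃ C c : ℝ, 0 < C ∧ 0 < c ∧
      ∀ x t : ℝ, 1/2 < t → t < 1 →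
        ((1 - t) ^ (-(1:ℝ)/2) * Real.exp (x ^ 2 / (4 * (1 - t)))) /
          ((1 - t) ^ (-(1:ℝ)/2) * Real.exp ((0:ℝ) ^ 2 / (4 * (1 - t)))) ≤
        C * Real.exp (c * x ^ 2 / t) := by
  rintro ⟨C, c, hC, hc, h⟩
  set K : ℝ := |Real.log C| + 2 * c + 1 with hK
  have hKpos : 0 < K := by positivity
  set δ : ℝ := min (1/4 : ℝ) (1 / (4 * K)) with hδ
  have hδpos : 0 < δ := lt_min (by norm_num) (by positivity)
  have hδle : δ ≤ 1 / (4 * K) := min_le_right _ _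
  have hδlt : δ < 1/2 := lt_of_le_of_lt (min_le_left _ _) (by norm_num)
  set t : ℝ := 1 - δ with ht
  have ht1 : 1/2 < t := by simp only [ht]; linarith
  have ht2 : t < 1 := by simp only [ht]; linarith
  have htpos : 0 < t := by linarith
  have h1t : (1 - t) = δ := by simp [ht]
  have hmain := h 1 t ht1 ht2
  rw [h1t] at hmain
  have hpow : (0:ℝ) < δ ^ (-(1:ℝ)/2) := Real.rpow_pos_of_pos hδpos _
  rw [mul_div_mul_left _ _ (ne_of_gt hpow)] at hmain
  have h0 : ((0:ℝ) ^ 2 / (4 * δ)) = 0 := by norm_num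
  rw [h0, Real.exp_zero, div_one, one_pow, mul_one] at hmain
  -- hmain : exp (1 / (4*δ)) ≤ C * exp (c / t)
  have hCeq : C = Real.exp (Real.log C) := (Real.exp_log hC).symm
  rw [hCeq, ← Real.exp_add] at hmain
  have hle : 1 / (4 * δ) ≤ Real.log C + c / t := Real.exp_le_exp.mp hmain
  have hct : c / t ≤ 2 * c := by
    rw [div_le_iff₀ htpos]
    nlinarith
  have hKle : K ≤ 1 / (4 * δ) := by
    rw [le_div_iff₀ (by positivity)]
    calc K * (4 * δ) ≤ K * (4 * (1 / (4 * K))) := by nlinarith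
      _ = 1 := by field_simp
  have : Real.log C ≤ |Real.log C| := le_abs_self _
  linarith
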